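/- Let $S$ be a normal Noetherian domain and $I$ an ideal of $S$. Then the Rees algebra $S[It] = \bigoplus_{n \geq 0} I^n t^n$ is a normal domain if and only if $I^n$ is integrally closed in $S$ for every positive integer $n$. -/

import Mathlib

open Polynomial

/-- `x` is integral over the ideal `I`: it satisfies an equation
`x^n + a_1 x^{n-1} + ⋯ + a_n = 0` with `a_i ∈ I^i`. -/
def IsIntegralOverIdeal {S : Type*} [CommRing S] (I : Ideal S) (x : S) : Prop :=
  ∃ n : ℕ, 0 < n ∧ ∃ a : ℕ → S, (∀ i ∈ Finset.Icc 1 n, a i ∈ I ^ i) ∧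
    x ^ n + ∑ i ∈ Finset.Icc 1 n, a i * x ^ (n - i) = 0

section Aux

variable {S : Type*} [CommRing S] [IsDomain S]

/-- The canonical map `S[X] → K₀[X]` where `K₀` is the fraction field of `S`. -/
noncomputable def ψ' (S : Type*) [CommRing S] [IsDomain S] :
    S[X] →ₐ[S] (FractionRing S)[X] :=
  Polynomial.mapAlgHom (Algebra.ofId S (FractionRing S))

lemma ψ'_apply (p : S[X]) : ψ' S p = p.map (algebraMap S (FractionRing S)) := rfl

lemma ψ'_C (s : S) : ψ' S (C s) = C (algebraMap S (FractionRing S) s) := by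
  simp [ψ'_apply]

lemma ψ'_monomial (n : ℕ) (s : S) :
    ψ' S (monomial n s) = monomial n (algebraMap S (FractionRing S) s) := by
  simp [ψ'_apply]

lemma ψ'_injective : Function.Injective (ψ' S) := fun p q h => by
  simpa [ψ'_apply] using
    Polynomial.map_injective _ (IsFractionRing.injective S (FractionRing S)) h

/-- The image of the Rees algebra of `I` inside `K₀[X]`. -/
noncomputable def reesK (S : Type*) [CommRing S] [IsDomain S] (I : Ideal S) :
    Subalgebra S (FractionRing S)[X] :=
  (reesAlgebra I).map (ψ' S)

lemma coeff_mem_of_mem_reesK {I : Ideal S} {f : (FractionRing S)[X]} (hf : f ∈ reesK S I)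
    (j : ℕ) : ∃ y ∈ I ^ j, f.coeff j = algebraMap S (FractionRing S) y := by
  obtain ⟨g, hg, rfl⟩ := hf
  exact ⟨g.coeff j, hg j, by simp [ψ'_apply]⟩

noncomputable instance reesKNoetherian [IsNoetherianRing S] (I : Ideal S) :
    IsNoetherianRing ↥(reesK S I) :=
by
  have e : ↥(reesAlgebra I) ≃+* ↥(reesK S I) :=
    ((reesAlgebra I).equivMapOfInjective (ψ' S) ψ'_injective).toRingEquiv
  exact isNoetherianRing_of_ringEquiv _ e

lemma eqn_to_isIntegral {R B : Type*} [CommRing R] [CommRing B] [Algebra R B]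
    {x : B} {n : ℕ} (hn : 0 < n) (b : ℕ → R)
    (heq : x ^ n + ∑ i ∈ Finset.Icc 1 n, algebraMap R B (b i) * x ^ (n - i) = 0) :
    IsIntegral R x := by
  refine ⟨X ^ n + ∑ i ∈ Finset.Icc 1 n, C (b i) * X ^ (n - i), ?_, ?_⟩
  · apply monic_X_pow_add
    refine lt_of_le_of_lt (degree_sum_le _ _) ?_
    rw [Finset.sup_lt_iff (by exact_mod_cast WithBot.bot_lt_coe n)]
    intro i hi
    refine lt_of_le_of_lt (degree_C_mul_X_pow_le _ _) ?_
    exact_mod_cast Nat.lt_of_lt_of_le (Nat.sub_lt hn (Finset.mem_Icc.mp hi).1) le_rfl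
  · simp only [eval₂_add, eval₂_pow, eval₂_finset_sum, eval₂_mul, eval₂_X, eval₂_C]
    exact heq

lemma Cmul_mem_rees {I : Ideal S} {a : S} (ha : a ∈ I) (s : S) (p : S[X]) {N : ℕ}
    (hN : p.natDegree ≤ N) : C (s * a ^ N) * p ∈ reesAlgebra I := by
  intro i
  rw [coeff_C_mul]
  by_cases hi : i ≤ N
  · have haN : a ^ N ∈ I ^ i := Ideal.pow_le_pow_right hi (Ideal.pow_mem_pow ha N)
    rw [mul_assoc]
    exact Ideal.mul_mem_left _ s (Ideal.mul_mem_right _ _ haN)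
  · rw [coeff_eq_zero_of_natDegree_lt (lt_of_le_of_lt hN (not_le.mp hi)), mul_zero]
    exact zero_mem _

set_option maxHeartbeats 1000000 in
set_option synthInstance.maxHeartbeats 100000 in
lemma critC [IsNoetherianRing S] (J : Ideal S) (x : FractionRing S) (c : S) (hc : c ≠ 0)
    (h : ∀ ℓ : ℕ, ∃ y ∈ J ^ ℓ,
      algebraMap S (FractionRing S) c * x ^ ℓ = algebraMap S (FractionRing S) y) :
    ∃ n : ℕ, 0 < n ∧ ∃ a : ℕ → S, (∀ i ∈ Finset.Icc 1 n, a i ∈ J ^ i) ∧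
      x ^ n + ∑ i ∈ Finset.Icc 1 n,
        algebraMap S (FractionRing S) (a i) * x ^ (n - i) = 0 := by
  classical
  set φ := algebraMap S (FractionRing S) with hφ
  set A' := reesK S J with hA'
  set ξ : (FractionRing S)[X] := C x * X with hξdef
  haveI hANoeth : IsNoetherianRing ↥A' := by rw [hA']; exact reesKNoetherian J
  have hCψ : Function.Injective (C ∘ φ) :=
    (Polynomial.C_injective).comp (IsFractionRing.injective S (FractionRing S))
  have smul1 : ∀ (r : ↥A') (u : (FractionRing S)[X]), r • u = ↑r * u := fun r u => rfl
  have hξpow : ∀ ℓ : ℕ, ξ ^ ℓ = monomial ℓ (x ^ ℓ) := fun ℓ => by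
    rw [hξdef, mul_pow, ← C_pow, C_mul_X_pow_eq_monomial]
  have hmem : ∀ ℓ : ℕ, C (φ c) * ξ ^ ℓ ∈ A' := by
    intro ℓ
    obtain ⟨y, hy, hxy⟩ := h ℓ
    refine ⟨monomial ℓ y, reesAlgebra.monomial_mem.mpr hy, ?_⟩
    show ψ' S (monomial ℓ y) = C (φ c) * ξ ^ ℓ
    rw [ψ'_monomial, hξpow, C_mul_monomial, hxy]
  have hfg : (Subalgebra.toSubmodule (Algebra.adjoin ↥A' {ξ})).FG := by
    set L : (FractionRing S)[X] →ₗ[↥A'] (FractionRing S)[X] :=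
      LinearMap.mulLeft ↥A' (C (φ c)) with hL
    have hC0 : C (φ c) ≠ 0 := fun h0 => hc (by
      have : (C ∘ φ) c = (C ∘ φ) 0 := by simpa using h0
      exact hCψ this)
    have hLinj : Function.Injective L := fun u v huv =>
      mul_left_cancel₀ hC0 (by simpa [hL, LinearMap.mulLeft_apply] using huv)
    apply Submodule.fg_of_fg_map_injective L hLinj
    set N : Submodule ↥A' (FractionRing S)[X] := Submodule.span ↥A' {1} with hNdef
    have hle : (Subalgebra.toSubmodule (Algebra.adjoin ↥A' {ξ})).map L ≤ N := by
      rw [Algebra.adjoin_eq_span, Submodule.map_span, Submodule.span_le]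
      rintro _ ⟨b, hb, rfl⟩
      obtain ⟨ℓ, rfl⟩ := Submonoid.mem_closure_singleton.mp hb
      rw [SetLike.mem_coe, hNdef, Submodule.mem_span_singleton]
      refine ⟨⟨C (φ c) * ξ ^ ℓ, hmem ℓ⟩, ?_⟩
      rw [smul1, mul_one]
      simp [hL, LinearMap.mulLeft_apply]
    haveI : IsNoetherian ↥A' ↥N :=
      isNoetherian_of_fg_of_noetherian (R := ↥A') (M := (FractionRing S)[X]) N
        (by rw [hNdef]; exact Submodule.fg_span (Set.finite_singleton (1 : (FractionRing S)[X])))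
    have hQ := IsNoetherian.noetherian (Submodule.comap N.subtype
      ((Subalgebra.toSubmodule (Algebra.adjoin ↥A' {ξ})).map L))
    have h2 := hQ.map N.subtype
    rwa [Submodule.map_comap_subtype, inf_eq_right.mpr hle] at h2
  have hξint : IsIntegral ↥A' ξ :=
    IsIntegral.of_mem_of_fg _ hfg _ (Algebra.self_mem_adjoin_singleton ↥A' ξ)
  obtain ⟨p, pmonic, hp⟩ := hξint
  set n := p.natDegree with hn
  have npos : 0 < n := by
    rcases Nat.eq_zero_or_pos n with h0 | hposs
    · exfalso
      have hp1 : p = 1 := (Polynomial.Monic.natDegree_eq_zero pmonic).mp h0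
      rw [hp1] at hp
      simpa using hp
    · exact hposs
  have hexp := Polynomial.aeval_eq_sum_range (R := ↥A') (S := (FractionRing S)[X]) (p := p) ξ
  rw [Polynomial.aeval_def, hp] at hexp
  replace hexp : (0 : (FractionRing S)[X]) = ∑ i ∈ Finset.range (n + 1),
      ((p.coeff i : (FractionRing S)[X]) * monomial i (x ^ i)) := by
    rw [hexp]
    exact Finset.sum_congr rfl fun i _ => by rw [smul1, hξpow]
  have hcoe := congrArg (fun q => Polynomial.coeff q n) hexp
  simp only [coeff_zero, Polynomial.finset_sum_coeff] at hcoe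
  replace hcoe : (0 : FractionRing S) = ∑ i ∈ Finset.range (n + 1),
      ((p.coeff i : (FractionRing S)[X]).coeff (n - i) * x ^ i) := by
    rw [hcoe]
    refine Finset.sum_congr rfl fun i hi => ?_
    have hin : i ≤ n := by
      have := Finset.mem_range.mp hi
      omega
    have h3 := Polynomial.coeff_mul_monomial
      ((p.coeff i : (FractionRing S)[X])) i (n - i) (x ^ i)
    rw [Nat.sub_add_cancel hin] at h3
    rw [h3]
  have hco : ∀ i : ℕ, ∃ y, y ∈ J ^ (n - i) ∧
      ((p.coeff i : (FractionRing S)[X])).coeff (n - i) = φ y := fun i => by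
    obtain ⟨y, h1, h2⟩ := coeff_mem_of_mem_reesK (p.coeff i).2 (n - i)
    exact ⟨y, h1, h2⟩
  choose Y hY1 hY2 using hco
  refine ⟨n, npos, fun j => Y (n - j), fun j hj => ?_, ?_⟩
  · have hjn := Finset.mem_Icc.mp hj
    have := hY1 (n - j)
    convert this using 2
    omega
  · rw [Finset.sum_range_succ] at hcoe
    have hlead : ((p.coeff n : (FractionRing S)[X]).coeff (n - n) * x ^ n) = x ^ n := by
      have h1 : p.coeff n = 1 := pmonic.coeff_natDegree
      rw [h1, Nat.sub_self]
      simp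
    rw [hlead] at hcoe
    have hrest : ∑ i ∈ Finset.range n, ((p.coeff i : (FractionRing S)[X]).coeff (n - i) * x ^ i)
        = ∑ j ∈ Finset.Icc 1 n, φ (Y (n - j)) * x ^ (n - j) := by
      refine Finset.sum_nbij' (fun i => n - i) (fun j => n - j) ?_ ?_ ?_ ?_ ?_
      · intro i hi
        have := Finset.mem_range.mp hi
        exact Finset.mem_Icc.mpr ⟨by omega, by omega⟩
      · intro j hj
        have := Finset.mem_Icc.mp hj
        exact Finset.mem_range.mpr (by omega)
      · intro i hi
        have := Finset.mem_range.mp hi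
        omega
      · intro j hj
        have := Finset.mem_Icc.mp hj
        omega
      · intro i hi
        have hi' := Finset.mem_range.mp hi
        rw [show n - (n - i) = i by omega, hY2 i]
    rw [hrest] at hcoe
    have hfin : x ^ n + ∑ j ∈ Finset.Icc 1 n, φ (Y (n - j)) * x ^ (n - j) = 0 := by
      rw [add_comm]
      exact hcoe.symm
    exact hfin

set_option maxHeartbeats 1000000 in
set_option synthInstance.maxHeartbeats 100000 in
lemma leadCoeff [IsNoetherianRing S] (I : Ideal S) {a : S} (ha : a ∈ I) (ha0 : a ≠ 0)
    {h : (FractionRing S)[X]} (hh : h ≠ 0) (hint : IsIntegral ↥(reesK S I) h) :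
    ∃ c : S, c ≠ 0 ∧ ∀ ℓ : ℕ, ∃ y ∈ (I ^ h.natDegree) ^ ℓ,
      algebraMap S (FractionRing S) c * h.leadingCoeff ^ ℓ
        = algebraMap S (FractionRing S) y := by
  classical
  set φ := algebraMap S (FractionRing S) with hφ
  set A' := reesK S I with hA'
  set d := h.natDegree with hd
  set c₀ := h.leadingCoeff with hc₀
  have hc₀0 : c₀ ≠ 0 := leadingCoeff_ne_zero.mpr hh
  obtain ⟨G, hG⟩ := hint.fg_adjoin_singleton
  set E := G.sup natDegree with hE
  set D : Submodule S (FractionRing S) :=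
    Submodule.span S ((fun pr : (FractionRing S)[X] × ℕ => pr.1.coeff pr.2) ''
      ↑(G ×ˢ Finset.range (E + 1))) with hD
  have key : ∀ q : (FractionRing S)[X], q ∈ Algebra.adjoin ↥A' {h} →
      ∀ n : ℕ, q.coeff n ∈ (I ^ (n - E)) • D := by
    intro q hq
    have hq' : q ∈ Submodule.span ↥A' (G : Set (FractionRing S)[X]) := by
      rw [hG]
      exact hq
    clear hq
    induction hq' using Submodule.span_induction with
    | mem g hg =>
      intro n
      by_cases hn : n ≤ E
      · have hn0 : n - E = 0 := by omega
        rw [hn0, pow_zero, Ideal.one_eq_top, Submodule.top_smul]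
        apply Submodule.subset_span
        exact ⟨(g, n), Finset.mem_coe.mpr (Finset.mem_product.mpr
          ⟨hg, Finset.mem_range.mpr (by omega)⟩), rfl⟩
      · have : g.natDegree < n := lt_of_le_of_lt (Finset.le_sup hg) (by omega)
        rw [coeff_eq_zero_of_natDegree_lt this]
        exact Submodule.zero_mem _
    | zero =>
      intro n
      simp only [coeff_zero]
      exact Submodule.zero_mem _
    | add u v hu hv ihu ihv =>
      intro n
      rw [coeff_add]
      exact Submodule.add_mem _ (ihu n) (ihv n)
    | smul r q hq ih =>
      intro n
      have hrq : (r • q).coeff n = ∑ x ∈ Finset.HasAntidiagonal.antidiagonal n,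
          (↑r : (FractionRing S)[X]).coeff x.1 * q.coeff x.2 := by
        show ((↑r : (FractionRing S)[X]) * q).coeff n = _
        exact coeff_mul _ _ n
      rw [hrq]
      apply Submodule.sum_mem
      rintro ⟨i, k⟩ hik
      have hik' : i + k = n := Finset.HasAntidiagonal.mem_antidiagonal.mp hik
      obtain ⟨y, hy, hcy⟩ := coeff_mem_of_mem_reesK r.2 i
      rw [hcy, ← Algebra.smul_def]
      have h1 : y • q.coeff k ∈ (I ^ i) • ((I ^ (k - E)) • D) :=
        Submodule.smul_mem_smul hy (ih k)
      rw [← Submodule.smul_assoc] at h1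
      have h2 : (I ^ i) • (I ^ (k - E)) = I ^ (i + (k - E)) := by
        rw [smul_eq_mul, ← pow_add]
      rw [h2] at h1
      exact Submodule.smul_mono_left (Ideal.pow_le_pow_right (by omega)) h1
  -- denominators
  obtain ⟨b, hb⟩ := IsLocalization.exist_integer_multiples (nonZeroDivisors S)
    (G ×ˢ Finset.range (E + 1)) (fun pr : (FractionRing S)[X] × ℕ => pr.1.coeff pr.2)
  set s₀ : S := (b : S) with hs₀def
  have hs₀ : s₀ ≠ 0 := nonZeroDivisors.ne_zero b.2
  have hs₀D : ∀ u ∈ D, s₀ • u ∈ LinearMap.range (Algebra.linearMap S (FractionRing S)) := by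
    intro u hu
    induction hu using Submodule.span_induction with
    | mem v hv =>
      obtain ⟨pr, hpr, rfl⟩ := hv
      obtain ⟨z, hz⟩ := hb pr (Finset.mem_coe.mp hpr)
      exact ⟨z, by simpa using hz⟩
    | zero => rw [smul_zero]; exact Submodule.zero_mem _
    | add u v hu hv ihu ihv =>
      rw [smul_add]
      exact Submodule.add_mem _ ihu ihv
    | smul t u hu ih =>
      rw [smul_comm]
      exact Submodule.smul_mem _ t ih
  have absorb : ∀ (Jid : Ideal S) (u : FractionRing S), u ∈ Jid • D →
      s₀ • u ∈ Submodule.map (Algebra.linearMap S (FractionRing S)) Jid := by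
    intro Jid u hu
    refine Submodule.smul_induction_on hu (fun y hy v hv => ?_) (fun u v ihu ihv => ?_)
    · rw [smul_comm]
      obtain ⟨z, hz⟩ := hs₀D v hv
      rw [← hz]
      exact ⟨y * z, Ideal.mul_mem_right z _ hy, by rw [← smul_eq_mul, map_smul]⟩
    · rw [smul_add]
      exact Submodule.add_mem _ ihu ihv
  refine ⟨s₀ * a ^ E, mul_ne_zero hs₀ (pow_ne_zero _ ha0), fun ℓ => ?_⟩
  have hpowmem : h ^ ℓ ∈ Algebra.adjoin ↥A' {h} :=
    pow_mem (Algebra.self_mem_adjoin_singleton ↥A' h) ℓ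
  have hcoeffpow : (h ^ ℓ).coeff (d * ℓ) = c₀ ^ ℓ := by
    have h1 : (h ^ ℓ).natDegree = ℓ * d := natDegree_pow' (by
      rw [← hc₀]; exact pow_ne_zero _ hc₀0)
    have h2 : (h ^ ℓ).coeff ((h ^ ℓ).natDegree) = (h ^ ℓ).leadingCoeff := coeff_natDegree
    rw [h1, mul_comm ℓ d] at h2
    rw [h2, leadingCoeff_pow]
  have h1 : c₀ ^ ℓ ∈ (I ^ (d * ℓ - E)) • D := by
    rw [← hcoeffpow]
    exact key _ hpowmem (d * ℓ)
  have h2 : a ^ E • c₀ ^ ℓ ∈ (I ^ (d * ℓ)) • D := by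
    have h3 : a ^ E • c₀ ^ ℓ ∈ (I ^ E) • ((I ^ (d * ℓ - E)) • D) :=
      Submodule.smul_mem_smul (Ideal.pow_mem_pow ha E) h1
    rw [← Submodule.smul_assoc] at h3
    have h4 : (I ^ E) • (I ^ (d * ℓ - E)) = I ^ (E + (d * ℓ - E)) := by
      rw [smul_eq_mul, ← pow_add]
    rw [h4] at h3
    exact Submodule.smul_mono_left (Ideal.pow_le_pow_right (by omega)) h3
  obtain ⟨y, hy, hyeq⟩ := absorb _ _ h2
  refine ⟨y, by rw [← pow_mul]; exact hy, ?_⟩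
  rw [← Algebra.smul_def, mul_smul]
  exact hyeq.symm

lemma mainInduction [IsNoetherianRing S] [IsIntegrallyClosed S] (I : Ideal S)
    {a : S} (ha : a ∈ I) (ha0 : a ≠ 0)
    (Hyp : ∀ n : ℕ, 0 < n → ∀ x : S, IsIntegralOverIdeal (I ^ n) x → x ∈ I ^ n)
    (h : (FractionRing S)[X]) (hint : IsIntegral ↥(reesK S I) h) : h ∈ reesK S I := by
  classical
  suffices H : ∀ (D : ℕ) (g : (FractionRing S)[X]), g.natDegree ≤ D →
      IsIntegral ↥(reesK S I) g → g ∈ reesK S I by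
    exact H h.natDegree h le_rfl hint
  intro D
  induction D using Nat.strong_induction_on with
  | _ D IH =>
  intro g hdeg hgint
  by_cases h0 : g = 0
  · rw [h0]
    exact Subalgebra.zero_mem _
  obtain ⟨c, hc0, hcrit⟩ := leadCoeff I ha ha0 h0 hgint
  obtain ⟨n, npos, aa, haa, heq⟩ := critC (I ^ g.natDegree) g.leadingCoeff c hc0 hcrit
  have hc₀int : IsIntegral S g.leadingCoeff := eqn_to_isIntegral npos aa heq
  obtain ⟨x, hx⟩ := IsIntegrallyClosed.isIntegral_iff.mp hc₀int
  have hdesc : x ^ n + ∑ i ∈ Finset.Icc 1 n, aa i * x ^ (n - i) = 0 := by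
    apply IsFractionRing.injective S (FractionRing S)
    simpa only [map_add, map_pow, map_sum, map_mul, map_zero, hx] using heq
  have hxII : IsIntegralOverIdeal (I ^ g.natDegree) x := ⟨n, npos, aa, haa, hdesc⟩
  by_cases hD0 : g.natDegree = 0
  · refine ⟨C x, (reesAlgebra I).algebraMap_mem x, ?_⟩
    show ψ' S (C x) = g
    rw [ψ'_C, hx]
    conv_rhs => rw [Polynomial.eq_C_of_natDegree_eq_zero hD0]
    rw [Polynomial.leadingCoeff, hD0]
  · have hxmem : x ∈ I ^ g.natDegree := Hyp _ (Nat.pos_of_ne_zero hD0) x hxII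
    have hmono : ψ' S (monomial g.natDegree x) = monomial g.natDegree g.leadingCoeff := by
      rw [ψ'_monomial, hx]
    have hmonomem : (monomial g.natDegree g.leadingCoeff : (FractionRing S)[X]) ∈ reesK S I := by
      rw [← hmono]
      exact ⟨monomial _ x, reesAlgebra.monomial_mem.mpr hxmem, rfl⟩
    have hint' : IsIntegral ↥(reesK S I) (g - monomial g.natDegree g.leadingCoeff) := by
      apply IsIntegral.sub hgint
      exact (isIntegral_algebraMap :
        IsIntegral ↥(reesK S I) (algebraMap ↥(reesK S I) ((FractionRing S)[X])
          (⟨_, hmonomem⟩ : ↥(reesK S I))))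
    by_cases h'0 : g - monomial g.natDegree g.leadingCoeff = 0
    · have hge : g = monomial g.natDegree g.leadingCoeff := by
        rw [← sub_eq_zero]
        exact h'0
      rw [hge]
      exact hmonomem
    · have hlt : (g - monomial g.natDegree g.leadingCoeff).natDegree < D := by
        have hdeg2 : (g - monomial g.natDegree g.leadingCoeff).degree < g.degree := by
          apply degree_sub_lt ?_ h0 ?_
          · rw [degree_monomial _ (leadingCoeff_ne_zero.mpr h0), degree_eq_natDegree h0]
          · rw [leadingCoeff_monomial]
        have := natDegree_lt_natDegree h'0 hdeg2
        omega
      have hmem' := IH _ hlt _ le_rfl hint'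
      have hge : g = (g - monomial g.natDegree g.leadingCoeff)
          + monomial g.natDegree g.leadingCoeff := by ring
      rw [hge]
      exact Subalgebra.add_mem _ hmem' hmonomem

/-- The map from the Rees algebra into the fraction field of `K₀[X]`. -/
noncomputable def algAK (S : Type*) [CommRing S] [IsDomain S] (I : Ideal S) :
    ↥(reesAlgebra I) →+* FractionRing ((FractionRing S)[X]) :=
  (algebraMap ((FractionRing S)[X]) (FractionRing ((FractionRing S)[X]))).comp
    ((ψ' S).toRingHom.comp (Subalgebra.val _).toRingHom)

lemma algAK_injective (I : Ideal S) : Function.Injective (algAK S I) := by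
  intro p q h
  apply Subtype.ext
  exact ψ'_injective (IsFractionRing.injective ((FractionRing S)[X]) _ h)

lemma clearDenom (P : (FractionRing S)[X]) :
    ∃ (s : S) (p : S[X]), s ≠ 0 ∧
      Polynomial.C (algebraMap S (FractionRing S) s) * P = ψ' S p := by
  induction P using Polynomial.induction_on' with
  | add P Q hP hQ =>
    obtain ⟨s, p, hs, hsp⟩ := hP
    obtain ⟨t, q, ht, htq⟩ := hQ
    refine ⟨s * t, C t * p + C s * q, mul_ne_zero hs ht, ?_⟩
    rw [map_add, map_mul (ψ' S), map_mul (ψ' S), ψ'_C, ψ'_C, ← hsp, ← htq, map_mul, map_mul]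
    ring
  | monomial n y =>
    obtain ⟨⟨y', s⟩, hys⟩ := IsLocalization.surj (nonZeroDivisors S) y
    refine ⟨s, monomial n y', nonZeroDivisors.ne_zero s.2, ?_⟩
    rw [ψ'_monomial, C_mul_monomial, mul_comm, hys]

lemma fracInstance (I : Ideal S) {a : S} (ha : a ∈ I) (ha0 : a ≠ 0) :
    letI : Algebra ↥(reesAlgebra I) (FractionRing ((FractionRing S)[X])) :=
      (algAK S I).toAlgebra
    IsFractionRing ↥(reesAlgebra I) (FractionRing ((FractionRing S)[X])) := by
  letI : Algebra ↥(reesAlgebra I) (FractionRing ((FractionRing S)[X])) := (algAK S I).toAlgebra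
  have halg : ∀ y : ↥(reesAlgebra I),
      algebraMap ↥(reesAlgebra I) (FractionRing ((FractionRing S)[X])) y = algAK S I y :=
    fun _ => rfl
  constructor
  constructor
  · rintro ⟨y, hy⟩
    rw [isUnit_iff_ne_zero]
    intro h0
    have hz : algAK S I y = algAK S I 0 := by rw [map_zero]; exact h0
    exact nonZeroDivisors.ne_zero hy (algAK_injective I hz)
  · intro z
    obtain ⟨⟨P, Q⟩, hPQ⟩ := IsLocalization.surj (nonZeroDivisors ((FractionRing S)[X])) z
    obtain ⟨s, p, hs, hsp⟩ := clearDenom P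
    obtain ⟨t, q, ht, htq⟩ := clearDenom (Q : (FractionRing S)[X])
    set N := max p.natDegree q.natDegree with hN
    have hp' : C (t * a ^ N) * p ∈ reesAlgebra I := Cmul_mem_rees ha t p (le_max_left _ _)
    have hq' : C (s * a ^ N) * q ∈ reesAlgebra I := Cmul_mem_rees ha s q (le_max_right _ _)
    have hq0 : q ≠ 0 := by
      intro h0
      apply nonZeroDivisors.ne_zero Q.2
      have : Polynomial.C (algebraMap S (FractionRing S) t) * (Q : (FractionRing S)[X]) = 0 := by
        rw [htq, h0, map_zero]
      rcases mul_eq_zero.mp this with h | h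
      · exact absurd ((IsFractionRing.injective S (FractionRing S))
          (by simpa [map_zero] using Polynomial.C_eq_zero.mp h)) ht
      · exact h
    have hq'0 : C (s * a ^ N) * q ≠ 0 :=
      mul_ne_zero (by
        simp only [ne_eq, Polynomial.C_eq_zero]
        exact mul_ne_zero hs (pow_ne_zero _ ha0)) hq0
    refine ⟨⟨⟨_, hp'⟩, ⟨⟨_, hq'⟩, mem_nonZeroDivisors_of_ne_zero (by
      simpa [Subtype.ext_iff] using hq'0)⟩⟩, ?_⟩
    rw [halg, halg]
    show z * (algebraMap ((FractionRing S)[X]) _) (ψ' S (C (s * a ^ N) * q))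
        = (algebraMap ((FractionRing S)[X]) _) (ψ' S (C (t * a ^ N) * p))
    have e1 : ψ' S (C (t * a ^ N) * p) =
        C (algebraMap S (FractionRing S) (s * t * a ^ N)) * P := by
      rw [map_mul (ψ' S), ψ'_C, ← hsp]
      simp only [map_mul]
      ring
    have e2 : ψ' S (C (s * a ^ N) * q) =
        C (algebraMap S (FractionRing S) (s * t * a ^ N)) * (Q : (FractionRing S)[X]) := by
      rw [map_mul (ψ' S), ψ'_C, ← htq]
      simp only [map_mul]
      ring
    rw [e1, e2, map_mul, map_mul, ← mul_assoc, mul_comm z, mul_assoc, hPQ, ← map_mul]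
  · intro x y hxy
    have hxy2 : x = y := algAK_injective I (by rw [← halg, ← halg]; exact hxy)
    exact ⟨1, by rw [hxy2]⟩

end Aux

set_option maxHeartbeats 1000000 in
set_option synthInstance.maxHeartbeats 100000 in
theorem stmt3 (S : Type*) [CommRing S] [IsDomain S] [IsNoetherianRing S]
    [IsIntegrallyClosed S] (I : Ideal S) :
    IsIntegrallyClosed (reesAlgebra I) ↔
      ∀ n : ℕ, 0 < n → ∀ x : S, IsIntegralOverIdeal (I ^ n) x → x ∈ I ^ n := by
  classical
  constructor
  · intro hIC n hn x hx
    by_cases hI : I = ⊥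
    · subst hI
      obtain ⟨m, hm, aa, haa, heq⟩ := hx
      have hz : ∀ i ∈ Finset.Icc 1 m, aa i = 0 := by
        intro i hi
        have hmem := haa i hi
        have h1 : (((⊥ : Ideal S) ^ n) ^ i : Ideal S) ≤ ⊥ := by
          calc ((⊥ : Ideal S) ^ n) ^ i ≤ (⊥ : Ideal S) ^ n :=
            Ideal.pow_le_self (by have := Finset.mem_Icc.mp hi; omega)
          _ ≤ ⊥ := Ideal.pow_le_self (by omega)
        exact Ideal.mem_bot.mp (h1 hmem)
      rw [Finset.sum_congr rfl (fun i hi => by rw [hz i hi, zero_mul]),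
        Finset.sum_const_zero, add_zero] at heq
      have hx0 : x = 0 := pow_eq_zero_iff (by omega) |>.mp heq
      rw [hx0]
      exact zero_mem _
    · obtain ⟨a, haI, ha0⟩ := Submodule.ne_bot_iff I |>.mp hI
      letI : Algebra ↥(reesAlgebra I) (FractionRing ((FractionRing S)[X])) :=
        (algAK S I).toAlgebra
      haveI := fracInstance I haI ha0
      haveI : IsIntegrallyClosed ↥(reesAlgebra I) := hIC
      obtain ⟨m, hm, aa, haa, heq⟩ := hx
      set aa' : ℕ → S := fun i => if i ∈ Finset.Icc 1 m then aa i else 0 with haadef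
      have haa'' : ∀ i : ℕ, monomial (n * i) (aa' i) ∈ reesAlgebra I := by
        intro i
        apply reesAlgebra.monomial_mem.mpr
        by_cases hi : i ∈ Finset.Icc 1 m
        · rw [haadef]
          simp only [hi, if_true]
          rw [pow_mul]
          exact haa i hi
        · rw [haadef]
          simp only [hi, if_false]
          exact zero_mem _
      have heq' : x ^ m + ∑ i ∈ Finset.Icc 1 m, aa' i * x ^ (m - i) = 0 := by
        rw [Finset.sum_congr rfl (fun i hi => by
          rw [show aa' i = aa i by rw [haadef]; simp only [hi, if_true]])]
        exact heq
      have heqS : (monomial n x : S[X]) ^ m + ∑ i ∈ Finset.Icc 1 m,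
          monomial (n * i) (aa' i) * (monomial n x : S[X]) ^ (m - i) = 0 := by
        have hterm : ∀ i ∈ Finset.Icc 1 m,
            monomial (n * i) (aa' i) * (monomial n x : S[X]) ^ (m - i)
            = monomial (n * m) (aa' i * x ^ (m - i)) := by
          intro i hi
          rw [Polynomial.monomial_pow, Polynomial.monomial_mul_monomial]
          have he : n * i + n * (m - i) = n * m := by
            rw [← Nat.mul_add]
            congr 1
            have := Finset.mem_Icc.mp hi
            omega
          rw [he]
        rw [Finset.sum_congr rfl hterm, Polynomial.monomial_pow,
          ← map_sum (monomial (n * m)), ← map_add, heq', map_zero]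
      set χ : S[X] →+* FractionRing ((FractionRing S)[X]) :=
        ((algebraMap ((FractionRing S)[X]) (FractionRing ((FractionRing S)[X]))).comp
          (ψ' S).toRingHom) with hχ
      have hKeq := congrArg χ heqS
      simp only [map_add, map_pow, map_sum, map_mul, map_zero] at hKeq
      have hξint : IsIntegral ↥(reesAlgebra I) (χ (monomial n x)) := by
        refine eqn_to_isIntegral hm
          (fun i => (⟨monomial (n * i) (aa' i), haa'' i⟩ : ↥(reesAlgebra I))) ?_
        exact hKeq
      obtain ⟨y, hy⟩ := IsIntegrallyClosed.isIntegral_iff.mp hξint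
      have hχinj : Function.Injective χ := fun u v huv =>
        ψ'_injective (IsFractionRing.injective ((FractionRing S)[X])
          (FractionRing ((FractionRing S)[X])) huv)
      have hvy : (y : S[X]) = monomial n x := by
        apply hχinj
        rw [← hy]
        rfl
      have hy2 := y.2
      rw [hvy] at hy2
      exact reesAlgebra.monomial_mem.mp hy2
  · intro Hyp
    by_cases hI : I = ⊥
    · subst hI
      have memBot : ∀ f : S[X], f ∈ reesAlgebra (⊥ : Ideal S) → f = C (f.coeff 0) := by
        intro f hf
        ext i
        rcases Nat.eq_zero_or_pos i with h0 | hpos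
        · rw [h0]
          simp
        · have hfi := hf i
          have hle : ((⊥ : Ideal S) ^ i : Ideal S) ≤ ⊥ := Ideal.pow_le_self (by omega)
          have hfz : f.coeff i = 0 := Ideal.mem_bot.mp (hle hfi)
          rw [hfz, coeff_C, if_neg (by omega)]
      set toS : ↥(reesAlgebra (⊥ : Ideal S)) →+* S :=
        ((evalRingHom (0 : S)).comp (Subalgebra.val _).toRingHom) with htoS
      set χ₀ : ↥(reesAlgebra (⊥ : Ideal S)) →+* FractionRing S :=
        ((algebraMap S (FractionRing S)).comp toS) with hχ₀
      have hχapp : ∀ u : ↥(reesAlgebra (⊥ : Ideal S)),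
          χ₀ u = algebraMap S (FractionRing S) ((u : S[X]).coeff 0) := by
        intro u
        rw [hχ₀]
        simp only [RingHom.comp_apply, htoS]
        show (algebraMap S (FractionRing S)) ((u : S[X]).eval 0) = _
        rw [← Polynomial.coeff_zero_eq_eval_zero]
      have hχinj : Function.Injective χ₀ := by
        intro u v huv
        apply Subtype.ext
        rw [memBot _ u.2, memBot _ v.2]
        rw [hχapp, hχapp] at huv
        rw [IsFractionRing.injective S (FractionRing S) huv]
      letI : Algebra ↥(reesAlgebra (⊥ : Ideal S)) (FractionRing S) := χ₀.toAlgebra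
      have halg : ∀ u, algebraMap ↥(reesAlgebra (⊥ : Ideal S)) (FractionRing S) u = χ₀ u :=
        fun _ => rfl
      haveI : IsFractionRing ↥(reesAlgebra (⊥ : Ideal S)) (FractionRing S) := by
        constructor
        constructor
        · rintro ⟨u, hu⟩
          rw [isUnit_iff_ne_zero]
          intro h0
          apply nonZeroDivisors.ne_zero hu
          apply hχinj
          rw [map_zero]
          exact h0
        · intro z
          obtain ⟨⟨y', t⟩, hyt⟩ := IsLocalization.surj (nonZeroDivisors S) z
          have htne : (t : S) ≠ 0 := nonZeroDivisors.ne_zero t.2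
          refine ⟨⟨⟨C y', (reesAlgebra _).algebraMap_mem y'⟩,
            ⟨⟨C (t : S), (reesAlgebra _).algebraMap_mem (t : S)⟩,
              mem_nonZeroDivisors_of_ne_zero (by
                simp only [ne_eq, Subtype.ext_iff]
                exact fun hc => htne (by simpa using congrArg (fun p => Polynomial.coeff p 0) hc))⟩⟩, ?_⟩
          rw [halg, halg, hχapp, hχapp]
          simpa using hyt
        · intro u v huv
          have h2 : u = v := hχinj (by rw [← halg, ← halg]; exact huv)
          exact ⟨1, by rw [h2]⟩
      rw [isIntegrallyClosed_iff (FractionRing S)]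
      intro z hz
      obtain ⟨p, pm, pe⟩ := hz
      have hzS : IsIntegral S z := by
        refine ⟨p.map toS, pm.map toS, ?_⟩
        rw [Polynomial.eval₂_map]
        exact pe
      obtain ⟨w, hw⟩ := IsIntegrallyClosed.isIntegral_iff.mp hzS
      refine ⟨⟨C w, (reesAlgebra _).algebraMap_mem w⟩, ?_⟩
      rw [halg, hχapp]
      simpa using hw
    · obtain ⟨a, haI, ha0⟩ := Submodule.ne_bot_iff I |>.mp hI
      letI : Algebra ↥(reesAlgebra I) (FractionRing ((FractionRing S)[X])) :=
        (algAK S I).toAlgebra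
      haveI := fracInstance I haI ha0
      rw [isIntegrallyClosed_iff (FractionRing ((FractionRing S)[X]))]
      intro z hz
      have hcomp : (algebraMap ↥(reesK S I) (FractionRing ((FractionRing S)[X]))).comp
          ((Subalgebra.equivMapOfInjective (reesAlgebra I) (ψ' S) ψ'_injective :
            ↥(reesAlgebra I) ≃ₐ[S] ↥((reesAlgebra I).map (ψ' S))) :
              ↥(reesAlgebra I) →ₐ[S] ↥((reesAlgebra I).map (ψ' S))).toRingHom
          = algebraMap ↥(reesAlgebra I) (FractionRing ((FractionRing S)[X])) := by
        ext r
        show (algebraMap ((FractionRing S)[X]) (FractionRing ((FractionRing S)[X])))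
          ((((reesAlgebra I).equivMapOfInjective (ψ' S) ψ'_injective) r :
            ↥((reesAlgebra I).map (ψ' S))) : (FractionRing S)[X]) = algAK S I r
        rw [Subalgebra.coe_equivMapOfInjective_apply]
        rfl
      have hz'' : IsIntegral ↥(reesK S I) z := by
        obtain ⟨p, pm, pe⟩ := hz
        refine ⟨p.map ((Subalgebra.equivMapOfInjective (reesAlgebra I) (ψ' S) ψ'_injective :
            ↥(reesAlgebra I) ≃ₐ[S] ↥((reesAlgebra I).map (ψ' S))) :
              ↥(reesAlgebra I) →ₐ[S] ↥((reesAlgebra I).map (ψ' S))).toRingHom,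
          pm.map _, ?_⟩
        erw [Polynomial.eval₂_map, hcomp]
        exact pe
      have hzK : IsIntegral ((FractionRing S)[X]) z := IsIntegral.tower_top hz''
      obtain ⟨hp, hhp⟩ := IsIntegrallyClosed.isIntegral_iff.mp hzK
      have hpint : IsIntegral ↥(reesK S I) hp := by
        apply IsIntegral.tower_bot
          (IsFractionRing.injective ((FractionRing S)[X]) (FractionRing ((FractionRing S)[X])))
        rw [hhp]
        exact hz''
      have hpmem := mainInduction I haI ha0 Hyp hp hpint
      obtain ⟨gS, hgS, hψ⟩ := hpmem
      refine ⟨⟨gS, hgS⟩, ?_⟩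
      show algAK S I ⟨gS, hgS⟩ = z
      rw [← hhp, ← hψ]
      rfl
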